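/- Let s > −1 and η > 0 satisfy η² ≥ 2^{1−2s}·2^42 if −1 < s < 1/2, and η² ≥ 2^42 if s ≥ 1/2. If w : ℝ → [0,∞) is a measurable function such that w(ξ) ≥ η^{2^n} · f_n(T_*) · g_n(ξ) for every n ∈ ℕ and every ξ ∈ ℝ, then ∫_ℝ |ξ|^{2s} w(ξ)² dξ = +∞; i.e., w has infinite homogeneous Sobolev Ḣ^s norm. -/

import Mathlib

open scoped ENNReal


open MeasureTheory Real Set

/-- The sequence of functions `g n`: `g 0` is the indicator of `(1,2)` and
`g (n+1) = g n * g n` (convolution). -/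
noncomputable def g : ℕ → ℝ → ℝ
  | 0 => Set.indicator (Set.Ioo (1:ℝ) 2) 1
  | n + 1 => fun ξ => ∫ ρ : ℝ, g n ρ * g n (ξ - ρ)

/-- `f n t = exp(-(3/2) t 2^(n+4)) 2^(-5(2^n-1)) 2^(5n)`. -/
noncomputable def f (n : ℕ) (t : ℝ) : ℝ :=
  Real.exp (-(3/2) * t * 2 ^ (n + 4)) * (2:ℝ) ^ (-(5:ℝ) * ((2:ℝ) ^ n - 1)) * 2 ^ (5 * n)

/-- The blow-up time `T_* = (2 ln 2)/3`. -/
noncomputable def Tstar : ℝ := 2 * Real.log 2 / 3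

/-- The (Fourier side) nonlinear term
`γ₁ (|·|v * |·|v)(ξ) - γ₂ (v * (·)² v)(ξ)`, as a well-defined element of `[0,∞]`
(recall `γ₂ ≤ 0 ≤ γ₁`). -/
noncomputable def nlTerm (γ₁ γ₂ : ℝ) (vτ : ℝ → ℝ) (ξ : ℝ) : ENNReal :=
  ENNReal.ofReal γ₁ * ∫⁻ ρ : ℝ, ENNReal.ofReal (|ρ| * vτ ρ * (|ξ - ρ| * vτ (ξ - ρ)))
  + ENNReal.ofReal (-γ₂) * ∫⁻ ρ : ℝ, ENNReal.ofReal (vτ ρ * ((ξ - ρ)^2 * vτ (ξ - ρ)))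

/-- A nonnegative measurable `v` on `[0,T] × ℝ` satisfies the Duhamel–Fourier
inequality if for all `t ∈ [0,T]` and `ξ ∈ ℝ`,
`v(t,ξ) ≥ η e^{-(3/2)tξ⁴} 𝟙_{(1,2)}(ξ) + ∫₀ᵗ e^{-(3/2)(t-τ)ξ⁴} (γ₁ (|·|v*|·|v) - γ₂ (v*(·)²v))(τ,ξ) dτ`,
the right-hand side being well defined in `[0,∞]`. -/
def DuhamelIneq (γ₁ γ₂ η T : ℝ) (v : ℝ → ℝ → ℝ) : Prop :=
  ∀ t ∈ Set.Icc (0:ℝ) T, ∀ ξ : ℝ,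
    ENNReal.ofReal (v t ξ) ≥
      ENNReal.ofReal (η * Real.exp (-(3/2) * t * ξ^4) * Set.indicator (Set.Ioo (1:ℝ) 2) 1 ξ)
      + ∫⁻ τ in Set.Ioc (0:ℝ) t,
          ENNReal.ofReal (Real.exp (-(3/2) * (t - τ) * ξ^4)) * nlTerm γ₁ γ₂ (v τ) ξ

lemma g_succ (n : ℕ) (ξ : ℝ) : g (n+1) ξ = ∫ ρ : ℝ, g n ρ * g n (ξ - ρ) := rfl

lemma g_props (n : ℕ) : Measurable (g n) ∧ (∀ ξ, 0 ≤ g n ξ) ∧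
    (∃ M : ℝ, 0 ≤ M ∧ ∀ ξ, g n ξ ≤ M) ∧
    (∀ ξ, ξ ∉ Set.Ioo ((2:ℝ)^n) ((2:ℝ)^(n+1)) → g n ξ = 0) := by
  induction n with
  | zero =>
    refine ⟨measurable_const.indicator measurableSet_Ioo, ?_, ⟨1, zero_le_one, ?_⟩, ?_⟩
    · intro ξ; exact Set.indicator_nonneg (fun _ _ => zero_le_one) ξ
    · intro ξ; by_cases h : ξ ∈ Set.Ioo (1:ℝ) 2 <;> simp [g, Set.indicator_apply, h]
    · intro ξ hξ
      have h' : ξ ∉ Set.Ioo (1:ℝ) 2 := by norm_num at hξ ⊢; exact hξ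
      simp [g, Set.indicator_apply, h']
  | succ n ih =>
    obtain ⟨hm, hnn, ⟨M, hM0, hM⟩, hsupp⟩ := ih
    set A : ℝ := (2:ℝ)^n with hA
    set B : ℝ := (2:ℝ)^(n+1) with hB
    have hABle : A ≤ B := by
      apply pow_le_pow_right₀ one_le_two; omega
    have hmul : ∀ ξ : ℝ, Measurable fun ρ => g n ρ * g n (ξ - ρ) := by
      intro ξ
      exact hm.mul (hm.comp (measurable_const.sub measurable_id))
    have hbd : ∀ ξ ρ : ℝ, ‖g n ρ * g n (ξ - ρ)‖ ≤
        (Set.Ioo A B).indicator (fun _ => M * M) ρ := by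
      intro ξ ρ
      by_cases h : ρ ∈ Set.Ioo A B
      · rw [Set.indicator_of_mem h, Real.norm_eq_abs,
          abs_of_nonneg (mul_nonneg (hnn _) (hnn _))]
        exact mul_le_mul (hM _) (hM _) (hnn _) hM0
      · rw [Set.indicator_of_notMem h, hsupp ρ h, zero_mul, norm_zero]
    have hind : Integrable ((Set.Ioo A B).indicator (fun _ => M * M)) volume := by
      refine (integrableOn_const ?_).integrable_indicator measurableSet_Ioo
      exact measure_Ioo_lt_top.ne
    have hint : ∀ ξ : ℝ, Integrable (fun ρ => g n ρ * g n (ξ - ρ)) volume := by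
      intro ξ
      exact hind.mono' (hmul ξ).aestronglyMeasurable (Filter.Eventually.of_forall (hbd ξ))
    refine ⟨?_, ?_, ?_, ?_⟩
    · have hF : StronglyMeasurable fun p : ℝ × ℝ => g n p.2 * g n (p.1 - p.2) :=
        ((hm.comp measurable_snd).mul
          (hm.comp (measurable_fst.sub measurable_snd))).stronglyMeasurable
      have h2 : StronglyMeasurable fun ξ : ℝ => ∫ ρ : ℝ, g n ρ * g n (ξ - ρ) :=
        hF.integral_prod_right' (ν := volume)
      simpa [g] using h2.measurable
    · intro ξ
      rw [g_succ]
      exact integral_nonneg fun ρ => mul_nonneg (hnn _) (hnn _)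
    · refine ⟨(volume (Set.Ioo A B)).toReal * (M * M), ?_, ?_⟩
      · exact mul_nonneg ENNReal.toReal_nonneg (mul_nonneg hM0 hM0)
      · intro ξ
        rw [g_succ]
        calc ∫ ρ, g n ρ * g n (ξ - ρ)
            ≤ ∫ ρ, (Set.Ioo A B).indicator (fun _ => M * M) ρ := by
              refine integral_mono (hint ξ) hind fun ρ => ?_
              have := hbd ξ ρ
              rwa [Real.norm_eq_abs, abs_of_nonneg (mul_nonneg (hnn _) (hnn _))] at this
          _ = (volume (Set.Ioo A B)).toReal * (M * M) := by
              rw [integral_indicator_const _ measurableSet_Ioo]; simp; left; rw [ENNReal.toReal_ofReal']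
    · intro ξ hξ
      have hξ' : ¬((2:ℝ)^(n+1) < ξ ∧ ξ < (2:ℝ)^(n+2)) := by
        simpa [Set.mem_Ioo] using hξ
      push_neg at hξ'
      rw [g_succ]
      have : ∀ ρ : ℝ, g n ρ * g n (ξ - ρ) = 0 := by
        intro ρ
        by_cases h : ρ ∈ Set.Ioo A B
        · have h2 : ξ - ρ ∉ Set.Ioo A B := by
            rcases h with ⟨h1, h2⟩
            intro ⟨h3, h4⟩
            have e1 : (2:ℝ)^(n+1) = A + A := by rw [hA]; ring
            have e2 : (2:ℝ)^(n+2) = B + B := by rw [hB]; ring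
            rcases lt_or_ge ((2:ℝ)^(n+1)) ξ with hc | hc
            · have := hξ' hc; rw [e2] at this; linarith
            · rw [e1] at hc; linarith
          rw [hsupp _ h2, mul_zero]
        · rw [hsupp _ h, zero_mul]
      simp [this]


lemma g_conv_integrable (n : ℕ) (ξ : ℝ) : Integrable (fun ρ => g n ρ * g n (ξ - ρ)) volume := by
  obtain ⟨hm, hnn, ⟨M, hM0, hM⟩, hsupp⟩ := g_props n
  have hmul : Measurable fun ρ => g n ρ * g n (ξ - ρ) :=
    hm.mul (hm.comp (measurable_const.sub measurable_id))
  have hind : Integrable ((Set.Ioo ((2:ℝ)^n) ((2:ℝ)^(n+1))).indicator (fun _ => M * M)) volume := by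
    refine (integrableOn_const ?_).integrable_indicator measurableSet_Ioo
    exact measure_Ioo_lt_top.ne
  refine hind.mono' hmul.aestronglyMeasurable (Filter.Eventually.of_forall fun ρ => ?_)
  by_cases h : ρ ∈ Set.Ioo ((2:ℝ)^n) ((2:ℝ)^(n+1))
  · rw [Set.indicator_of_mem h, Real.norm_eq_abs,
      abs_of_nonneg (mul_nonneg (hnn _) (hnn _))]
    exact mul_le_mul (hM _) (hM _) (hnn _) hM0
  · rw [Set.indicator_of_notMem h, hsupp ρ h, zero_mul, norm_zero]

lemma g_ofReal_succ (n : ℕ) (ξ : ℝ) :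
    ENNReal.ofReal (g (n+1) ξ) =
      ∫⁻ ρ : ℝ, ENNReal.ofReal (g n ρ) * ENNReal.ofReal (g n (ξ - ρ)) := by
  obtain ⟨hm, hnn, -, -⟩ := g_props n
  rw [g_succ, ofReal_integral_eq_lintegral_ofReal (g_conv_integrable n ξ)
    (Filter.Eventually.of_forall fun ρ => mul_nonneg (hnn _) (hnn _))]
  congr 1
  funext ρ
  exact ENNReal.ofReal_mul (hnn _)

lemma g_lintegral (n : ℕ) : ∫⁻ ξ : ℝ, ENNReal.ofReal (g n ξ) = 1 := by
  induction n with
  | zero =>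
    have h : ∀ ξ : ℝ, ENNReal.ofReal (g 0 ξ) =
        (Set.Ioo (1:ℝ) 2).indicator (fun _ => (1:ENNReal)) ξ := by
      intro ξ
      by_cases hh : ξ ∈ Set.Ioo (1:ℝ) 2 <;> simp [g, Set.indicator_apply, hh]
    simp only [h]
    rw [lintegral_indicator measurableSet_Ioo]
    simp [Real.volume_Ioo]
    norm_num
  | succ n ih =>
    obtain ⟨hm, hnn, -, -⟩ := g_props n
    have hmE : Measurable fun ξ => ENNReal.ofReal (g n ξ) := hm.ennreal_ofReal
    simp only [g_ofReal_succ]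
    rw [lintegral_lintegral_swap]
    · have inner : ∀ ρ : ℝ, ∫⁻ ξ : ℝ, ENNReal.ofReal (g n ρ) * ENNReal.ofReal (g n (ξ - ρ))
          = ENNReal.ofReal (g n ρ) := by
        intro ρ
        rw [lintegral_const_mul _ (show Measurable fun ξ : ℝ => ENNReal.ofReal (g n (ξ - ρ))
          from hmE.comp (measurable_id.sub measurable_const)),
          lintegral_sub_right_eq_self (fun ξ => ENNReal.ofReal (g n ξ)) ρ, ih, mul_one]
      simp only [inner, ih]
    · exact ((hmE.comp measurable_snd).mul
        (hmE.comp (measurable_fst.sub measurable_snd))).aemeasurable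

lemma f_Tstar (n : ℕ) : f n Tstar = (2:ℝ) ^ (-(21:ℝ) * 2^n + 5*n + 5) := by
  unfold f Tstar
  have h1 : -(3/2) * (2 * Real.log 2 / 3) * (2:ℝ)^(n+4) = Real.log 2 * (-(2:ℝ)^(n+4)) := by
    ring
  rw [h1, ← Real.rpow_def_of_pos two_pos,
    show ((2:ℝ)^(5*n) : ℝ) = (2:ℝ) ^ (((5*n : ℕ)) : ℝ) from (Real.rpow_natCast 2 (5*n)).symm,
    ← Real.rpow_add two_pos, ← Real.rpow_add two_pos]
  congr 1
  push_cast
  ring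

/-- Infinite `Ḣˢ` norm: let `s > -1` and `η > 0` satisfy `η² ≥ 2^(1-2s)·2^42`
if `-1 < s < 1/2` and `η² ≥ 2^42` if `s ≥ 1/2`. If the nonnegative measurable
`w` satisfies `w(ξ) ≥ η^(2^n) f_n(T_*) g_n(ξ)` for every `n` and `ξ`, then
`∫ |ξ|^(2s) w(ξ)² dξ = +∞`. -/
theorem hs_norm_infinite (s η : ℝ) (hs : -1 < s) (hη : 0 < η)
    (hη1 : -1 < s → s < 1/2 → (2:ℝ) ^ (1 - 2*s) * 2 ^ 42 ≤ η ^ 2)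
    (hη2 : 1/2 ≤ s → (2:ℝ) ^ (42:ℕ) ≤ η ^ 2)
    (w : ℝ → ℝ) (hwmeas : Measurable w) (hwpos : ∀ ξ, 0 ≤ w ξ)
    (hlow : ∀ n : ℕ, ∀ ξ : ℝ, η ^ (2 ^ n) * f n Tstar * g n ξ ≤ w ξ) :
    ∫⁻ ξ : ℝ, ENNReal.ofReal (|ξ| ^ (2*s) * (w ξ) ^ 2) = ⊤ := by
  -- η is at least 2^21
  have h42 : (2:ℝ)^(42:ℕ) ≤ η ^ 2 := by
    rcases le_or_gt (1/2 : ℝ) s with hcs | hcs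
    · exact hη2 hcs
    · have h := hη1 hs hcs
      have h1 : (1:ℝ) ≤ (2:ℝ) ^ (1 - 2*s) := Real.one_le_rpow one_le_two (by linarith)
      have h2 : ((2:ℝ)^(42:ℕ) : ℝ) = 2 ^ (42:ℝ) := by norm_num
      nlinarith [Real.rpow_pos_of_pos two_pos (1 - 2*s)]
  have hη21 : (2:ℝ)^(21:ℕ) ≤ η := by
    nlinarith [sq_nonneg (η - 2^21)]
  -- the key constant
  set K : ℕ → ℝ := fun n => η ^ (2 ^ n) * f n Tstar with hKdef
  have hKpos : ∀ n, 0 < K n := by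
    intro n
    rw [hKdef]
    simp only
    rw [f_Tstar]
    positivity
  have hK : ∀ n : ℕ, (2:ℝ) ^ (5*(n:ℝ)+5) ≤ K n := by
    intro n
    have hp : (2:ℝ)^((21:ℕ)*2^n : ℕ) ≤ η ^ (2^n) := by
      rw [pow_mul]
      exact pow_le_pow_left₀ (by positivity) hη21 _
    have hp' : (2:ℝ)^((((21:ℕ)*2^n : ℕ)) : ℝ) ≤ η ^ (2^n) := by
      rwa [Real.rpow_natCast]
    calc (2:ℝ) ^ (5*(n:ℝ)+5)
        = (2:ℝ)^((((21:ℕ)*2^n : ℕ)) : ℝ) * (2:ℝ) ^ (-(21:ℝ) * 2^n + 5*n + 5) := by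
          rw [← Real.rpow_add two_pos]
          congr 1
          push_cast
          ring
      _ ≤ η ^ (2^n) * f n Tstar := by
          rw [f_Tstar]
          exact mul_le_mul_of_nonneg_right hp' (by positivity)
  -- per-n lower bound on the integral
  set J := ∫⁻ ξ : ℝ, ENNReal.ofReal (|ξ| ^ (2*s) * (w ξ) ^ 2) with hJdef
  have hmain : ∀ n : ℕ, ENNReal.ofReal ((2:ℝ) ^ ((9+2*s)*(n:ℝ)+8)) ≤ J := by
    intro n
    obtain ⟨hgm, hgnn, -, hgsupp⟩ := g_props n
    set I : Set ℝ := Set.Ioo ((2:ℝ)^n) ((2:ℝ)^(n+1)) with hIdef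
    set F : ℝ → ℝ≥0∞ := fun ξ => ENNReal.ofReal (w ξ) with hFdef
    have hFm : Measurable F := hwmeas.ennreal_ofReal
    have hV : volume I = ENNReal.ofReal ((2:ℝ)^n) := by
      rw [hIdef, Real.volume_Ioo]
      congr 1
      ring
    -- step 1: the mass of w on I
    have hg1 : ∫⁻ ξ in I, ENNReal.ofReal (g n ξ) = 1 := by
      rw [← lintegral_indicator measurableSet_Ioo]
      rw [show (I.indicator fun ξ => ENNReal.ofReal (g n ξ)) = fun ξ => ENNReal.ofReal (g n ξ) by
        funext ξ
        by_cases h : ξ ∈ I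
        · rw [Set.indicator_of_mem h]
        · rw [Set.indicator_of_notMem h, hgsupp ξ h, ENNReal.ofReal_zero]]
      exact g_lintegral n
    have h1 : ENNReal.ofReal (K n) ≤ ∫⁻ ξ in I, F ξ := by
      calc ENNReal.ofReal (K n) = ENNReal.ofReal (K n) * ∫⁻ ξ in I, ENNReal.ofReal (g n ξ) := by
            rw [hg1, mul_one]
        _ = ∫⁻ ξ in I, ENNReal.ofReal (K n) * ENNReal.ofReal (g n ξ) := by
            rw [lintegral_const_mul _ hgm.ennreal_ofReal]
        _ = ∫⁻ ξ in I, ENNReal.ofReal (K n * g n ξ) := by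
            congr 1; funext ξ; rw [ENNReal.ofReal_mul (hKpos n).le]
        _ ≤ ∫⁻ ξ in I, F ξ := by
            refine lintegral_mono fun ξ => ?_
            exact ENNReal.ofReal_le_ofReal (hlow n ξ)
    -- step 2: Cauchy-Schwarz
    set X := ∫⁻ ξ in I, F ξ ^ (2:ℝ) with hXdef
    have hcs : ∫⁻ ξ in I, F ξ ≤ X ^ (1/2 : ℝ) * (volume I) ^ (1/2 : ℝ) := by
      have hpq : Real.HolderConjugate 2 2 := Real.HolderConjugate.two_two
      have := ENNReal.lintegral_mul_le_Lp_mul_Lq (volume.restrict I) hpq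
        hFm.aemeasurable (aemeasurable_const (b := (1:ℝ≥0∞)))
      simpa [hXdef, Measure.restrict_apply_univ] using this
    have hXV : ENNReal.ofReal (K n) * ENNReal.ofReal (K n) ≤ X * volume I := by
      have h := le_trans h1 hcs
      have h2 := mul_le_mul' h h
      calc ENNReal.ofReal (K n) * ENNReal.ofReal (K n)
          ≤ (X ^ (1/2:ℝ) * (volume I) ^ (1/2:ℝ)) * (X ^ (1/2:ℝ) * (volume I) ^ (1/2:ℝ)) := h2
        _ = (X ^ (1/2:ℝ) * X ^ (1/2:ℝ)) * ((volume I) ^ (1/2:ℝ) * (volume I) ^ (1/2:ℝ)) := by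
            ring
        _ = X * volume I := by
            rw [← ENNReal.rpow_add_of_nonneg _ _ (by norm_num) (by norm_num),
              ← ENNReal.rpow_add_of_nonneg _ _ (by norm_num) (by norm_num)]
            norm_num
    have hX : ENNReal.ofReal (K n * K n) / ENNReal.ofReal ((2:ℝ)^n) ≤ X := by
      rw [ENNReal.div_le_iff (by positivity) ENNReal.ofReal_ne_top]
      rw [ENNReal.ofReal_mul (hKpos n).le, ← hV]
      exact hXV
    -- step 3: weight lower bound on I
    set l : ℝ := (2:ℝ) ^ (2*s*(n:ℝ) - 2) with hldef
    have hl : ∀ ξ ∈ I, l ≤ |ξ| ^ (2*s) := by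
      intro ξ hξ
      obtain ⟨hξ1, hξ2⟩ := hξ
      have hξpos : (0:ℝ) < ξ := lt_trans (by positivity) hξ1
      rw [abs_of_pos hξpos]
      rcases le_or_gt 0 s with hs0 | hs0
      · have hb : ((2:ℝ)^n) ^ (2*s) ≤ ξ ^ (2*s) :=
          Real.rpow_le_rpow (by positivity) hξ1.le (by linarith)
        refine le_trans ?_ hb
        rw [← Real.rpow_natCast 2 n, ← Real.rpow_mul (by norm_num : (0:ℝ) ≤ 2)]
        apply Real.rpow_le_rpow_of_exponent_le one_le_two
        nlinarith
      · have hb : ((2:ℝ)^(n+1)) ^ (2*s) ≤ ξ ^ (2*s) :=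
          Real.rpow_le_rpow_of_nonpos hξpos hξ2.le (by linarith)
        refine le_trans ?_ hb
        rw [← Real.rpow_natCast 2 (n+1), ← Real.rpow_mul (by norm_num : (0:ℝ) ≤ 2)]
        apply Real.rpow_le_rpow_of_exponent_le one_le_two
        push_cast
        nlinarith
    -- step 4: put things together
    have hF2 : ∀ ξ : ℝ, F ξ ^ (2:ℝ) = ENNReal.ofReal ((w ξ)^2) := by
      intro ξ
      rw [ENNReal.ofReal_pow (hwpos ξ), hFdef]
      rw [show ((2:ℝ)) = ((2:ℕ) : ℝ) by norm_num, ENNReal.rpow_natCast]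
    have h3 : ENNReal.ofReal l * X ≤ J := by
      calc ENNReal.ofReal l * X = ∫⁻ ξ in I, ENNReal.ofReal l * F ξ ^ (2:ℝ) := by
            rw [lintegral_const_mul _ (hFm.pow_const _)]
        _ ≤ ∫⁻ ξ in I, ENNReal.ofReal (|ξ| ^ (2*s) * (w ξ)^2) := by
            refine setLIntegral_mono' measurableSet_Ioo fun ξ hξ => ?_
            rw [hF2, ← ENNReal.ofReal_mul (by positivity : (0:ℝ) ≤ l)]
            refine ENNReal.ofReal_le_ofReal ?_
            exact mul_le_mul_of_nonneg_right (hl ξ hξ) (sq_nonneg _)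
        _ ≤ J := by
            rw [hJdef]
            exact setLIntegral_le_lintegral _ _
    have h4 : ENNReal.ofReal (l * (K n * K n) / (2:ℝ)^n) ≤ J := by
      refine le_trans ?_ h3
      rw [ENNReal.ofReal_div_of_pos (by positivity), ENNReal.ofReal_mul (by positivity : (0:ℝ) ≤ l),
        mul_div_assoc]
      gcongr
    refine le_trans (ENNReal.ofReal_le_ofReal ?_) h4
    have hKK : (2:ℝ) ^ (5*(n:ℝ)+5) * (2:ℝ) ^ (5*(n:ℝ)+5) ≤ K n * K n := by
      have h := hK n
      have h0 : (0:ℝ) ≤ (2:ℝ) ^ (5*(n:ℝ)+5) := by positivity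
      exact mul_le_mul h h h0 (le_trans h0 h)
    calc (2:ℝ) ^ ((9+2*s)*(n:ℝ)+8)
        = l * ((2:ℝ) ^ (5*(n:ℝ)+5) * (2:ℝ) ^ (5*(n:ℝ)+5)) / (2:ℝ)^n := by
          rw [hldef, ← Real.rpow_add two_pos, ← Real.rpow_add two_pos,
            ← Real.rpow_natCast 2 n, ← Real.rpow_sub two_pos]
          congr 1
          ring
      _ ≤ l * (K n * K n) / (2:ℝ)^n := by
          gcongr <;> first | positivity | exact hK n
  -- conclude
  by_contra hne
  have hub : ∀ n : ℕ, (2:ℝ) ^ ((9+2*s)*(n:ℝ)+8) ≤ J.toReal := by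
    intro n
    have h := ENNReal.toReal_mono hne (hmain n)
    rwa [ENNReal.toReal_ofReal (by positivity)] at h
  have ha : (1:ℝ) < (2:ℝ) ^ (9+2*s) := by
    rw [Real.one_lt_rpow_iff_of_pos two_pos]
    left
    exact ⟨one_lt_two, by linarith⟩
  obtain ⟨n, hn⟩ := pow_unbounded_of_one_lt (J.toReal) ha
  have hle : ((2:ℝ) ^ (9+2*s)) ^ n ≤ (2:ℝ) ^ ((9+2*s)*(n:ℝ)+8) := by
    rw [← Real.rpow_natCast ((2:ℝ) ^ (9+2*s)) n, ← Real.rpow_mul (by norm_num : (0:ℝ) ≤ 2)]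
    apply Real.rpow_le_rpow_of_exponent_le one_le_two
    linarith
  linarith [hub n]
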